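/- arXiv:2509.07954 — 2 statements merged into one kernel-verified Lean document; each statement's English description precedes it below -/
import Mathlib

section
/- Let F be a graph of order t ≥ 2 and let G be an F-free graph. Assume that Q₁, Q₂, …, Q_t are symmetric subgraphs of G. Let G′ be the graph obtained from G by adding a new copy Q of Q₁ such that Q, Q₁, Q₂, …, Q_t are symmetric subgraphs in G′ (i.e., each new vertex of Q is joined to exactly the same vertices of V(G) ∖ (V(Q₁) ∪ ⋯ ∪ V(Q_t)) as its corresponding vertex of Q₁). Then G′ is also F-free. -/
open SimpleGraph

/-- `G` contains a (not necessarily induced) copy of `F`. -/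
def ContainsCopy {V W : Type*} (F : SimpleGraph V) (G : SimpleGraph W) : Prop :=
  ∃ f : V → W, Function.Injective f ∧ ∀ ⦃a b : V⦄, F.Adj a b → G.Adj (f a) (f b)

/-- `Q 0, …, Q (τ-1)` are symmetric subgraphs of the induced subgraph `G[A]`:
they are connected, pairwise disjoint, contained in `A`, and pairwise isomorphic
via isomorphisms under which corresponding vertices have the same neighbours in
`A` outside all of the `Q i`. -/
def SymmetricSubgraphsOn {V : Type*} (G : SimpleGraph V) (A : Set V) {τ : ℕ}
    (Q : Fin τ → Set V) : Prop :=
  (∀ i, Q i ⊆ A) ∧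
  (∀ i, (G.induce (Q i)).Connected) ∧
  (Pairwise fun i j => Disjoint (Q i) (Q j)) ∧
  ∃ ψ : ∀ i j : Fin τ, (Q i) ≃ (Q j),
    (∀ i j, ∀ a b : Q i, G.Adj (a : V) (b : V) ↔ G.Adj (ψ i j a : V) (ψ i j b : V)) ∧
    (∀ i j, ∀ u : Q i, ∀ v ∈ A \ ⋃ k, Q k,
      (G.Adj (u : V) v ↔ G.Adj (ψ i j u : V) v))

/-- Symmetric subgraphs of `G` itself. -/
abbrev SymmetricSubgraphs {V : Type*} (G : SimpleGraph V) {τ : ℕ} (Q : Fin τ → Set V) : Prop :=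
  SymmetricSubgraphsOn G Set.univ Q

/-- The graph `G'` obtained from `G` by adding a new copy of the induced subgraph on `Q0`
(one new vertex for each vertex of `Q0`), where each new vertex is joined to the copy of
its neighbours inside `Q0` and to exactly the same vertices of `V(G) ∖ ⋃ i, Q i` as the
vertex of `Q0` it corresponds to. -/
def addCopy {V : Type*} (G : SimpleGraph V) {τ : ℕ} (Q : Fin τ → Set V) (Q0 : Set V) :
    SimpleGraph (V ⊕ ↥Q0) where
  Adj x y :=
    match x, y with
    | Sum.inl a, Sum.inl b => G.Adj a b
    | Sum.inl a, Sum.inr u => a ∉ (⋃ i, Q i) ∧ G.Adj a (u : V)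
    | Sum.inr u, Sum.inl a => a ∉ (⋃ i, Q i) ∧ G.Adj a (u : V)
    | Sum.inr u, Sum.inr w => G.Adj (u : V) (w : V)
  symm := by
    constructor
    rintro (a|a) (b|b) h
    · exact h.symm
    · exact h
    · exact h
    · exact h.symm
  loopless := by
    constructor
    rintro (a|a) h
    · exact G.irrefl h
    · exact G.irrefl h

/-- **Observation 1.** If `F` has order `t ≥ 2`, `G` is `F`-free and
`Q 0, …, Q (t-1)` are symmetric subgraphs of `G`, then the graph `G'` obtained from `G`
by adding a new copy of `Q 0` so that the new copy together with `Q 0, …, Q (t-1)` are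
symmetric subgraphs of `G'` is again `F`-free. -/
theorem observation_one {α V : Type*} [Fintype α] [Fintype V] {t : ℕ} (ht : 2 ≤ t)
    (F : SimpleGraph α) (hcard : Fintype.card α = t)
    (G : SimpleGraph V) (hfree : ¬ ContainsCopy F G)
    (Q : Fin t → Set V) (hsym : SymmetricSubgraphs G Q) :
    ¬ ContainsCopy F (addCopy G Q (Q ⟨0, by omega⟩)) := by
  classical
  rintro ⟨f, finj, fadj⟩
  obtain ⟨-, -, hQdisj, ψ, hψadj, hψout⟩ := hsym
  by_cases hall : ∀ x, ∃ a, f x = Sum.inl a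
  · apply hfree
    choose g hg using hall
    refine ⟨g, fun x y hxy => finj (by rw [hg, hg, hxy]), fun a b hab => ?_⟩
    have h := fadj hab
    rw [hg a, hg b] at h
    exact h
  push_neg at hall
  obtain ⟨x0, hx0⟩ := hall
  -- find an index j whose part Q j is untouched by the inl-part of f
  have hexj : ∃ j : Fin t, ∀ x a, f x = Sum.inl a → a ∉ Q j := by
    by_contra hc
    push_neg at hc
    choose xw aw hfw hmem using hc
    have hxwinj : Function.Injective xw := by
      intro i j hij
      by_contra hne
      have haw : aw i = aw j := by
        have h1 := hfw i
        rw [hij, hfw j] at h1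
        exact (Sum.inl.inj h1).symm
      exact Set.disjoint_left.mp (hQdisj hne) (hmem i) (haw ▸ hmem j)
    have hne0 : ∀ i, xw i ≠ x0 := by
      intro i h
      exact hx0 (aw i) (h ▸ hfw i)
    let F' : Option (Fin t) → α := fun o => o.elim x0 xw
    have hF'inj : Function.Injective F' := by
      rintro (_ | i) (_ | j) h
      · rfl
      · exact absurd h.symm (hne0 j)
      · exact absurd h (hne0 i)
      · exact congrArg _ (hxwinj h)
    have := Fintype.card_le_of_injective F' hF'inj
    rw [Fintype.card_option, Fintype.card_fin, hcard] at this
    omega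
  obtain ⟨j, hj⟩ := hexj
  have h0 : (0:ℕ) < t := by omega
  apply hfree
  refine ⟨fun x => Sum.elim id (fun u => ((ψ ⟨0, h0⟩ j u : Q j) : V)) (f x), ?_, ?_⟩
  · intro x y h
    cases hfx : f x with
    | inl a =>
      cases hfy : f y with
      | inl b =>
        simp only [hfx, hfy, Sum.elim_inl, id] at h
        exact finj (by rw [hfx, hfy, h])
      | inr u =>
        simp only [hfx, hfy, Sum.elim_inl, Sum.elim_inr, id] at h
        exact absurd (h ▸ (ψ ⟨0, h0⟩ j u).property) (hj x a hfx)
    | inr u =>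
      cases hfy : f y with
      | inl b =>
        simp only [hfx, hfy, Sum.elim_inl, Sum.elim_inr, id] at h
        exact absurd (h ▸ (ψ ⟨0, h0⟩ j u).property) (hj y b hfy)
      | inr w =>
        simp only [hfx, hfy, Sum.elim_inr] at h
        have : u = w := (ψ ⟨0, h0⟩ j).injective (Subtype.val_injective h)
        exact finj (by rw [hfx, hfy, this])
  · intro a b hab
    have H := fadj hab
    cases hfx : f a with
    | inl a0 =>
      cases hfy : f b with
      | inl b0 =>
        rw [hfx, hfy] at H
        simp only [hfx, hfy, Sum.elim_inl, id]
        exact H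
      | inr u =>
        rw [hfx, hfy] at H
        simp only [hfx, hfy, Sum.elim_inl, Sum.elim_inr, id]
        have H' : a0 ∉ (⋃ i, Q i) ∧ G.Adj a0 (u : V) := H
        exact ((hψout ⟨0, h0⟩ j u a0 ⟨Set.mem_univ _, H'.1⟩).mp H'.2.symm).symm
    | inr u =>
      cases hfy : f b with
      | inl b0 =>
        rw [hfx, hfy] at H
        simp only [hfx, hfy, Sum.elim_inl, Sum.elim_inr, id]
        have H' : b0 ∉ (⋃ i, Q i) ∧ G.Adj b0 (u : V) := H
        exact (hψout ⟨0, h0⟩ j u b0 ⟨Set.mem_univ _, H'.1⟩).mp H'.2.symm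
      | inr w =>
        rw [hfx, hfy] at H
        simp only [hfx, hfy, Sum.elim_inr]
        exact (hψadj ⟨0, h0⟩ j u w).mp H
end

section
/- Let 𝓕 be a finite family of graphs with min_{F∈𝓕} χ(F) = r+1 ≥ 3, t = max_{F∈𝓕} |F| and q = q(𝓕). For large m, let 𝒢_m be the set of 𝓕-free graphs H on m vertices admitting a partition V(H) = W ∪ S₁ ∪ ⋯ ∪ S_r with |W| = q−1, |S_i| = ⌊(m−q+1)/r⌋ or ⌈(m−q+1)/r⌉, and for each i a subset S'_i ⊆ S_i with |S_i − S'_i| ≤ t² and N_H(v) = V(H) − S_i for all v ∈ S'_i. For H ∈ 𝒢_m, let 𝒟(H) ∈ 𝒢_{m+r} be obtained from H by adding, for each 1 ≤ i ≤ r, a new vertex x_i placed in S_i with N(x_i) = V(𝒟(H)) − (S_i ∪ {x_i}), and let 𝒟⁻¹(H) ∈ 𝒢_{m−r} be obtained from H by deleting one vertex of S'_i for each 1 ≤ i ≤ r. If H has the maximum number of edges among all graphs in 𝒢_m, then 𝒟(H) has the maximum number of edges among all graphs in 𝒢_{m+r}, and 𝒟⁻¹(H) has the maximum number of edges among all graphs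 in 𝒢_{m−r}. -/
open SimpleGraph

/-- The join `G ⊗ H` of two graphs. -/
def gJoin {α β : Type*} (G : SimpleGraph α) (H : SimpleGraph β) : SimpleGraph (α ⊕ β) where
  Adj x y :=
    match x, y with
    | Sum.inl a, Sum.inl b => G.Adj a b
    | Sum.inr a, Sum.inr b => H.Adj a b
    | _, _ => True
  symm := by constructor; rintro (a|a) (b|b) h <;> simp_all <;> exact h.symm
  loopless := by constructor; rintro (a|a) h <;> simp_all

/-- The disjoint union `G ∪ H` of two graphs. -/
def gUnion {α β : Type*} (G : SimpleGraph α) (H : SimpleGraph β) : SimpleGraph (α ⊕ β) where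
  Adj x y :=
    match x, y with
    | Sum.inl a, Sum.inl b => G.Adj a b
    | Sum.inr a, Sum.inr b => H.Adj a b
    | _, _ => False
  symm := by constructor; rintro (a|a) (b|b) h <;> simp_all <;> exact h.symm
  loopless := by constructor; rintro (a|a) h <;> simp_all

/-- The disjoint union `mH` of `m` copies of `H`. -/
def gCopies (m : ℕ) {α : Type*} (H : SimpleGraph α) : SimpleGraph (Fin m × α) where
  Adj x y := x.1 = y.1 ∧ H.Adj x.2 y.2
  symm := by constructor; rintro ⟨i, a⟩ ⟨j, b⟩ ⟨h1, h2⟩; exact ⟨h1.symm, h2.symm⟩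
  loopless := by constructor; rintro ⟨i, a⟩ ⟨_, h⟩; exact H.loopless.irrefl a h

/-- Number of edges of a graph. -/
noncomputable def edgeCount {V : Type*} (G : SimpleGraph V) : ℕ := G.edgeSet.ncard

/-- A finite graph, packaged with its number of vertices. -/
def FinGraph : Type := (n : ℕ) × SimpleGraph (Fin n)

/-- `G` contains no member of the family `𝓕`. -/
def FamFree {ι V : Type*} (𝓕 : ι → FinGraph) (G : SimpleGraph V) : Prop :=
  ∀ i, ¬ ContainsCopy (𝓕 i).2 G

/-- The defining partition for membership of `H` in `𝒢_m` (`m = |V|`):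
`V(H) = W ∪ S₁ ∪ ⋯ ∪ S_r` with `|W| = q-1`, `|S_i| = ⌊(m-q+1)/r⌋` or `⌈(m-q+1)/r⌉`, and
subsets `S'_i ⊆ S_i` with `|S_i - S'_i| ≤ t²` such that every `v ∈ S'_i` is adjacent to
exactly the vertices outside `S_i`. -/
def GoodPartition {V : Type*} [Fintype V] (r t q : ℕ) (H : SimpleGraph V)
    (W : Set V) (S S' : Fin r → Set V) : Prop :=
  (∀ v, v ∈ W ∨ ∃ i, v ∈ S i) ∧
  (∀ i, Disjoint W (S i)) ∧
  (Pairwise fun i j => Disjoint (S i) (S j)) ∧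
  W.ncard = q - 1 ∧
  (∀ i, (S i).ncard = (Fintype.card V - q + 1) / r ∨
        (S i).ncard = (Fintype.card V - q + 1 + r - 1) / r) ∧
  (∀ i, S' i ⊆ S i ∧ (S i \ S' i).ncard ≤ t ^ 2 ∧
    ∀ v ∈ S' i, H.neighborSet v = Set.univ \ S i)

/-- `H ∈ 𝒢_m` where `m = |V(H)|`. -/
def InGm {ι : Type*} (𝓕 : ι → FinGraph) (r t q : ℕ) {V : Type*} [Fintype V]
    (H : SimpleGraph V) : Prop :=
  FamFree 𝓕 H ∧ ∃ W S S', GoodPartition r t q H W S S'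

/-- The graph `𝒟(H)`: for each `1 ≤ i ≤ r` a new vertex `x_i` is added to the part `S_i`,
joined to everything outside `S_i ∪ {x_i}`. -/
def extendGraph {V : Type*} (H : SimpleGraph V) {r : ℕ} (S : Fin r → Set V) :
    SimpleGraph (V ⊕ Fin r) where
  Adj x y :=
    match x, y with
    | Sum.inl a, Sum.inl b => H.Adj a b
    | Sum.inl a, Sum.inr i => a ∉ S i
    | Sum.inr i, Sum.inl a => a ∉ S i
    | Sum.inr i, Sum.inr j => i ≠ j
  symm := by
    constructor
    rintro (a|a) (b|b) h
    · exact h.symm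
    · exact h
    · exact h
    · exact h.symm
  loopless := by
    constructor
    rintro (a|a) h
    · exact H.loopless.irrefl a h
    · exact h rfl


/-! ### Auxiliary lemmas -/

section Auxiliary

open Finset

lemma edgeCount_eq_natCard {V : Type*} (G : SimpleGraph V) : edgeCount G = Nat.card G.edgeSet := by
  rw [edgeCount, Nat.card_coe_set_eq]

lemma edgeCount_congr {V W : Type*} {G : SimpleGraph V} {G' : SimpleGraph W} (φ : G ≃g G') :
    edgeCount G = edgeCount G' := by
  rw [edgeCount_eq_natCard, edgeCount_eq_natCard]
  exact Nat.card_congr φ.mapEdgeSet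

open Classical in
lemma edgeCount_eq_card_edgeFinset {V : Type*} [Fintype V] (G : SimpleGraph V) :
    edgeCount G = G.edgeFinset.card := by
  rw [edgeCount, Set.ncard_eq_toFinset_card', edgeFinset]

open Classical in
lemma edgeCount_extendGraph {V : Type*} [Fintype V] (H : SimpleGraph V) {r : ℕ}
    (S : Fin r → Set V) :
    edgeCount (extendGraph H S) =
      edgeCount H + (∑ i, (Fintype.card V - (S i).ncard)) + r.choose 2 := by
  classical
  have hcompl : ∀ i, Fintype.card {a : V // a ∉ S i} = Fintype.card V - (S i).ncard := by
    intro i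
    rw [Fintype.card_subtype_compl]
    congr 1
    rw [Set.ncard_eq_toFinset_card', Set.toFinset_card]
  have key : 2 * edgeCount (extendGraph H S) =
      2 * (edgeCount H + (∑ i, (Fintype.card V - (S i).ncard)) + r.choose 2) := by
    rw [edgeCount_eq_card_edgeFinset, ← sum_degrees_eq_twice_card_edges]
    rw [Fintype.sum_sum_type]
    have hdegl : ∀ a : V, (extendGraph H S).degree (Sum.inl a) =
        H.degree a + Fintype.card {i : Fin r // a ∉ S i} := by
      intro a
      rw [← card_neighborSet_eq_degree, ← card_neighborSet_eq_degree]
      have : Fintype.card ((extendGraph H S).neighborSet (Sum.inl a)) =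
          Fintype.card ({b : V // H.Adj a b} ⊕ {i : Fin r // a ∉ S i}) :=
        Fintype.card_congr (Equiv.subtypeSum (p := fun x => (extendGraph H S).Adj (Sum.inl a) x))
      rw [this, Fintype.card_sum]
      rfl
    have hdegr : ∀ i : Fin r, (extendGraph H S).degree (Sum.inr i) =
        Fintype.card {a : V // a ∉ S i} + (r - 1) := by
      intro i
      rw [← card_neighborSet_eq_degree]
      have : Fintype.card ((extendGraph H S).neighborSet (Sum.inr i)) =
          Fintype.card ({a : V // a ∉ S i} ⊕ {j : Fin r // i ≠ j}) :=
        Fintype.card_congr (Equiv.subtypeSum (p := fun x => (extendGraph H S).Adj (Sum.inr i) x))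
      rw [this, Fintype.card_sum]
      have h5 : Fintype.card {j : Fin r // i ≠ j} = Fintype.card {j : Fin r // j ≠ i} :=
        Fintype.card_congr (Equiv.subtypeEquivRight (fun j => ne_comm))
      have h6 : Fintype.card {j : Fin r // j ≠ i} = r - 1 := by
        rw [Fintype.card_subtype_compl, Fintype.card_subtype_eq, Fintype.card_fin]
      rw [h5, h6]
    simp only [hdegl, hdegr]
    rw [Finset.sum_add_distrib, Finset.sum_add_distrib, sum_degrees_eq_twice_card_edges,
      ← edgeCount_eq_card_edgeFinset]
    have hswap : ∑ a : V, Fintype.card {i : Fin r // a ∉ S i}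
        = ∑ i : Fin r, Fintype.card {a : V // a ∉ S i} := by
      simp only [Fintype.card_subtype, Finset.card_filter]
      exact Finset.sum_comm
    have hchoose : ∑ _i : Fin r, (r - 1) = 2 * r.choose 2 := by
      have hdvd : 2 ∣ r * (r - 1) := by
        cases r with
        | zero => simp
        | succ n =>
          rw [Nat.succ_sub_one, Nat.mul_comm]
          exact (Nat.even_mul_succ_self n).two_dvd
      rw [Finset.sum_const, Finset.card_univ, Fintype.card_fin, smul_eq_mul,
        Nat.choose_two_right, Nat.mul_div_cancel' hdvd]
    rw [hswap, hchoose]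
    simp only [hcompl]
    ring
  omega

lemma famFree_of_hom {ι V W : Type*} {𝓕 : ι → FinGraph} {G : SimpleGraph V}
    {G' : SimpleGraph W} (f : W → V) (hf : Function.Injective f)
    (hadj : ∀ ⦃a b : W⦄, G'.Adj a b → G.Adj (f a) (f b)) (h : FamFree 𝓕 G) : FamFree 𝓕 G' := by
  rintro k ⟨g, hg, hgadj⟩
  exact h k ⟨f ∘ g, hf.comp hg, fun a b hab => hadj (hgadj hab)⟩

lemma famFree_extendGraph {ι V : Type*} [Fintype V] {𝓕 : ι → FinGraph} {t r : ℕ}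
    (htmax : ∀ i, (𝓕 i).1 ≤ t)
    {H : SimpleGraph V} {S S' : Fin r → Set V}
    (hdisj : Pairwise fun i j => Disjoint (S i) (S j))
    (hsub : ∀ i, S' i ⊆ S i)
    (hnbhd : ∀ i, ∀ v ∈ S' i, H.neighborSet v = Set.univ \ S i)
    (hbig : ∀ i, t < (S' i).ncard)
    (hfree : FamFree 𝓕 H) : FamFree 𝓕 (extendGraph H S) := by
  rintro k ⟨f, hinj, hadj⟩
  set A : Set V := Sum.inl ⁻¹' (Set.range f) with hA
  have hAcard : A.ncard ≤ t := by
    calc A.ncard = (Sum.inl '' A : Set (V ⊕ Fin r)).ncard :=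
          (Set.ncard_image_of_injective _ Sum.inl_injective).symm
    _ ≤ (Set.range f).ncard := Set.ncard_le_ncard (Set.image_preimage_subset _ _) (Set.toFinite _)
    _ = (f '' Set.univ).ncard := by rw [Set.image_univ]
    _ ≤ (Set.univ : Set (Fin (𝓕 k).1)).ncard := Set.ncard_image_le (Set.toFinite _)
    _ = (𝓕 k).1 := by rw [Set.ncard_univ, Nat.card_eq_fintype_card, Fintype.card_fin]
    _ ≤ t := htmax k
  have hne : ∀ i, (S' i \ A).Nonempty := by
    intro i
    apply Set.nonempty_of_ncard_ne_zero
    have h1 := Set.ncard_le_ncard_diff_add_ncard (S' i) A (Set.toFinite _)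
    have h2 := hbig i
    omega
  choose v hv using hne
  have hvS' : ∀ i, v i ∈ S' i := fun i => (hv i).1
  have hvA : ∀ i, v i ∉ A := fun i => (hv i).2
  have adjv : ∀ i, ∀ w, w ∉ S i → H.Adj (v i) w := by
    intro i w hw
    have := hnbhd i (v i) (hvS' i)
    have hmem : w ∈ H.neighborSet (v i) := by rw [this]; exact ⟨Set.mem_univ w, hw⟩
    exact hmem
  have hvnotin : ∀ i j, i ≠ j → v j ∉ S i := by
    intro i j hij
    exact fun hmem => (hdisj hij.symm).le_bot ⟨hsub j (hvS' j), hmem⟩ |>.elim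
  refine hfree k ⟨Sum.elim id v ∘ f, ?_, ?_⟩
  · intro b1 b2 h
    rcases hf1 : f b1 with a1 | i1 <;> rcases hf2 : f b2 with a2 | i2 <;>
      simp only [Function.comp_apply, hf1, hf2, Sum.elim_inl, Sum.elim_inr, id] at h
    · exact hinj (by rw [hf1, hf2, h])
    · exact absurd (h ▸ Set.mem_preimage.mpr ⟨b1, hf1⟩ : v i2 ∈ A) (hvA i2)
    · exact absurd (h ▸ Set.mem_preimage.mpr ⟨b2, hf2⟩ : v i1 ∈ A) (hvA i1)
    · have : i1 = i2 := by
        by_contra hne'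
        exact hvnotin i1 i2 hne' (h ▸ hsub i1 (hvS' i1))
      exact hinj (by rw [hf1, hf2, this])
  · intro a b hab
    have had := hadj hab
    rcases hfa : f a with x | i <;> rcases hfb : f b with y | j <;>
      rw [hfa, hfb] at had <;>
      simp only [Function.comp_apply, hfa, hfb, Sum.elim_inl, Sum.elim_inr, id]
    · exact had
    · exact (adjv j x had).symm
    · exact adjv i y had
    · exact adjv i (v j) (hvnotin i j had)

lemma ncard_biUnion {ι V : Type*} [Fintype V] (s : Finset ι) (S : ι → Set V)
    (h : ∀ i ∈ s, ∀ j ∈ s, i ≠ j → Disjoint (S i) (S j)) :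
    (⋃ i ∈ s, S i).ncard = ∑ i ∈ s, (S i).ncard := by
  classical
  induction s using Finset.induction with
  | empty => simp
  | @insert a s ha ih =>
    rw [Finset.sum_insert ha, Finset.set_biUnion_insert, Set.ncard_union_eq ?_ (Set.toFinite _)
      (Set.toFinite _), ih (fun i hi j hj hij => h i (Finset.mem_insert_of_mem hi) j
      (Finset.mem_insert_of_mem hj) hij)]
    exact Set.disjoint_iUnion₂_right.mpr fun i hi =>
      h a (Finset.mem_insert_self a s) i (Finset.mem_insert_of_mem hi)
        (fun he => ha (he ▸ hi))

lemma goodPartition_sum {V : Type*} [Fintype V] {r t q : ℕ} {H : SimpleGraph V}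
    {W : Set V} {S S' : Fin r → Set V} (hgp : GoodPartition r t q H W S S') :
    (q - 1) + ∑ i, (S i).ncard = Fintype.card V := by
  classical
  obtain ⟨hcover, hdisjW, hdisj, hW, -, -⟩ := hgp
  have huniv : (Set.univ : Set V) = W ∪ ⋃ i ∈ Finset.univ, S i := by
    ext v
    simp only [Set.mem_univ, true_iff, Set.mem_union, Set.mem_iUnion]
    rcases hcover v with h | ⟨i, h⟩
    · exact Or.inl h
    · exact Or.inr ⟨i, Finset.mem_univ i, h⟩
  have := Set.ncard_univ V
  rw [huniv, Set.ncard_union_eq ?_ (Set.toFinite _) (Set.toFinite _),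
    ncard_biUnion _ _ (fun i _ j _ hij => hdisj hij), hW] at this
  · rw [this, Nat.card_eq_fintype_card]
  · exact Set.disjoint_iUnion₂_right.mpr fun i _ => hdisjW i

lemma ncard_S_le_ceil {V : Type*} [Fintype V] {r t q : ℕ} {H : SimpleGraph V}
    {W : Set V} {S S' : Fin r → Set V} (hr : 0 < r)
    (hgp : GoodPartition r t q H W S S') (i : Fin r) :
    (S i).ncard ≤ (Fintype.card V - q + 1 + r - 1) / r := by
  rcases hgp.2.2.2.2.1 i with h | h
  · rw [h]; exact Nat.div_le_div_right (by omega)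
  · rw [h]

lemma S'_big {V : Type*} [Fintype V] {r t q : ℕ} {H : SimpleGraph V}
    {W : Set V} {S S' : Fin r → Set V} (hgp : GoodPartition r t q H W S S')
    (hr : 0 < r) (hbig : r * (t ^ 2 + t + 1) ≤ Fintype.card V - q + 1) (i : Fin r) :
    t < (S' i).ncard := by
  obtain ⟨-, -, -, -, hsize, hS'⟩ := hgp
  have h1 : (S i).ncard ≤ (S i \ S' i).ncard + (S' i).ncard :=
    Set.ncard_le_ncard_diff_add_ncard _ _ (Set.toFinite _)
  have h2 : (S i \ S' i).ncard ≤ t ^ 2 := (hS' i).2.1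
  have h3 : (Fintype.card V - q + 1) / r ≤ (S i).ncard := by
    rcases hsize i with h | h
    · exact h.ge
    · rw [h]; exact Nat.div_le_div_right (by omega)
  have h4 : t ^ 2 + t + 1 ≤ (Fintype.card V - q + 1) / r :=
    (Nat.le_div_iff_mul_le hr).mpr (by rw [Nat.mul_comm]; exact hbig)
  omega

lemma ncard_setT {V : Type*} [Fintype V] {r : ℕ} (x : Fin r → V)
    (hinj : Function.Injective x) :
    ({v : V | ∀ i, v ≠ x i} : Set V).ncard = Fintype.card V - r := by
  have hset : {v : V | ∀ i, v ≠ x i} = (Set.range x)ᶜ := by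
    ext v; simp [Set.mem_range, not_exists, eq_comm]
  have hrange : (Set.range x).ncard = r := by
    rw [← Set.image_univ, Set.ncard_image_of_injective _ hinj, Set.ncard_univ,
      Nat.card_eq_fintype_card, Fintype.card_fin]
  have := Set.ncard_add_ncard_compl (Set.range x) (Set.toFinite _) (Set.toFinite _)
  rw [hrange, Nat.card_eq_fintype_card] at this
  rw [hset]
  omega

lemma cardT_eq {V : Type*} [Fintype V] {r : ℕ} (x : Fin r → V)
    (hinj : Function.Injective x) [Fintype ↥{v : V | ∀ i, v ≠ x i}] :
    Fintype.card ↥{v : V | ∀ i, v ≠ x i} = Fintype.card V - r := by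
  rw [← Nat.card_eq_fintype_card, Nat.card_coe_set_eq]
  exact ncard_setT x hinj

lemma ncard_preimage_val {V : Type*} [Fintype V] (T B : Set V) :
    (Subtype.val ⁻¹' B : Set ↥T).ncard = (B ∩ T).ncard := by
  rw [← Set.ncard_image_of_injective _ (Subtype.val_injective (p := (· ∈ T))),
    Set.image_preimage_eq_inter_range, Subtype.range_val]

lemma ncard_preimage_S {V : Type*} [Fintype V] {r : ℕ} {S : Fin r → Set V}
    (hdisj : Pairwise fun i j => Disjoint (S i) (S j)) (x : Fin r → V)
    (hxS : ∀ i, x i ∈ S i) (i : Fin r) :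
    (Subtype.val ⁻¹' S i : Set ↥{v : V | ∀ j, v ≠ x j}).ncard = (S i).ncard - 1 := by
  rw [ncard_preimage_val]
  have hST : S i ∩ {v : V | ∀ j, v ≠ x j} = S i \ {x i} := by
    ext v
    simp only [Set.mem_inter_iff, Set.mem_diff, Set.mem_singleton_iff, Set.mem_setOf_eq]
    constructor
    · exact fun ⟨h1, h2⟩ => ⟨h1, h2 i⟩
    · rintro ⟨h1, h2⟩
      refine ⟨h1, fun j hj => ?_⟩
      rcases eq_or_ne j i with rfl | hne
      · exact h2 hj
      · exact (hdisj hne).le_bot ⟨hj ▸ hxS j, h1⟩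
  rw [hST, Set.ncard_diff_singleton_of_mem (hxS i)]

lemma goodPartition_extendGraph {V : Type*} [Fintype V] {r t q : ℕ} {H : SimpleGraph V}
    {W : Set V} {S S' : Fin r → Set V} (hr : 0 < r) (hq : q ≤ Fintype.card V)
    (hgp : GoodPartition r t q H W S S') :
    GoodPartition r t q (extendGraph H S) (Sum.inl '' W)
      (fun i => Sum.inl '' S i ∪ {Sum.inr i})
      (fun i => Sum.inl '' S' i ∪ {Sum.inr i}) := by
  obtain ⟨hcover, hdisjW, hdisj, hW, hsize, hS'⟩ := hgp
  have hcard : Fintype.card (V ⊕ Fin r) = Fintype.card V + r := by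
    rw [Fintype.card_sum, Fintype.card_fin]
  refine ⟨?_, ?_, ?_, ?_, ?_, ?_⟩
  · rintro (a | i)
    · rcases hcover a with h | ⟨i, h⟩
      · exact Or.inl ⟨a, h, rfl⟩
      · exact Or.inr ⟨i, Or.inl ⟨a, h, rfl⟩⟩
    · exact Or.inr ⟨i, Or.inr rfl⟩
  · intro i
    rw [Set.disjoint_union_right]
    constructor
    · exact (Set.disjoint_image_iff Sum.inl_injective).mpr (hdisjW i)
    · simp
  · intro i j hij
    rw [Set.disjoint_union_right, Set.disjoint_union_left, Set.disjoint_union_left]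
    refine ⟨⟨(Set.disjoint_image_iff Sum.inl_injective).mpr (hdisj hij), by simp⟩, by simp,
      by simp [hij]⟩
  · rw [Set.ncard_image_of_injective _ Sum.inl_injective]; exact hW
  · intro i
    have h1 : (Sum.inl '' S i ∪ {Sum.inr i} : Set (V ⊕ Fin r)).ncard = (S i).ncard + 1 := by
      rw [Set.union_singleton, Set.ncard_insert_of_notMem (by simp) (Set.toFinite _),
        Set.ncard_image_of_injective _ Sum.inl_injective]
    rw [h1, hcard]
    have e1 : Fintype.card V + r - q + 1 = (Fintype.card V - q + 1) + r := by omega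
    have e2 : Fintype.card V + r - q + 1 + r - 1 = (Fintype.card V - q + 1 + r - 1) + r := by omega
    have d1 : (Fintype.card V + r - q + 1) / r = (Fintype.card V - q + 1) / r + 1 := by
      rw [e1, Nat.add_div_right _ hr]
    have d2 : (Fintype.card V + r - q + 1 + r - 1) / r
        = (Fintype.card V - q + 1 + r - 1) / r + 1 := by
      rw [e2, Nat.add_div_right _ hr]
    rw [d1, d2]
    rcases hsize i with h | h
    · exact Or.inl (by omega)
    · exact Or.inr (by omega)
  · intro i
    obtain ⟨hsub, hdiff, hnbhd⟩ := hS' i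
    refine ⟨Set.union_subset_union_left _ (Set.image_mono hsub), ?_, ?_⟩
    · have : (Sum.inl '' S i ∪ {Sum.inr i}) \ (Sum.inl '' S' i ∪ {Sum.inr i})
          = Sum.inl '' (S i \ S' i) := by
        rw [Set.union_diff_distrib]
        rw [Set.image_diff Sum.inl_injective]
        ext x
        rcases x with a | j <;> simp
      rw [this, Set.ncard_image_of_injective _ Sum.inl_injective]
      exact hdiff
    · rintro v hv
      ext x
      rcases hv with ⟨a, ha, rfl⟩ | hv
      · have hnb := hnbhd a ha
        have haS : a ∈ S i := hsub ha
        rcases x with b | j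
        · simp only [mem_neighborSet, Set.mem_diff, Set.mem_univ, true_and, Set.mem_union,
            Set.mem_image, Set.mem_singleton_iff]
          constructor
          · intro hadj
            have : b ∈ H.neighborSet a := hadj
            rw [hnb] at this
            push_neg
            exact ⟨fun c hc hcb => this.2 (Sum.inl.inj hcb ▸ hc), by simp⟩
          · intro hnot
            push_neg at hnot
            have hbS : b ∉ S i := fun hb => hnot.1 b hb rfl
            show H.Adj a b
            have : b ∈ H.neighborSet a := by rw [hnb]; exact ⟨trivial, hbS⟩
            exact this
        · simp only [mem_neighborSet, Set.mem_diff, Set.mem_univ, true_and, Set.mem_union,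
            Set.mem_image, Set.mem_singleton_iff]
          constructor
          · intro hadj
            have hji : a ∉ S j := hadj
            push_neg
            refine ⟨by simp, ?_⟩
            intro hji'
            exact hji (by rw [Sum.inr.inj hji']; exact haS)
          · intro hnot
            push_neg at hnot
            have hne : j ≠ i := fun h => hnot.2 (by rw [h])
            show a ∉ S j
            exact fun haj => (hdisj hne).le_bot ⟨haj, haS⟩
      · simp only [Set.mem_singleton_iff] at hv
        subst hv
        rcases x with b | j
        · simp only [mem_neighborSet, Set.mem_diff, Set.mem_univ, true_and, Set.mem_union,
            Set.mem_image, Set.mem_singleton_iff]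
          constructor
          · intro hadj
            have : b ∉ S i := hadj
            push_neg
            exact ⟨fun c hc hcb => this (Sum.inl.inj hcb ▸ hc), by simp⟩
          · intro hnot
            push_neg at hnot
            show b ∉ S i
            exact fun hb => hnot.1 b hb rfl
        · simp only [mem_neighborSet, Set.mem_diff, Set.mem_univ, true_and, Set.mem_union,
            Set.mem_image, Set.mem_singleton_iff]
          constructor
          · intro hadj
            have : i ≠ j := hadj
            push_neg
            exact ⟨by simp, fun h => this (by injection h.symm)⟩
          · intro hnot
            push_neg at hnot
            show i ≠ j
            exact fun h => hnot.2 (by rw [h])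

lemma goodPartition_induce {V : Type*} [Fintype V] {r t q : ℕ} {H : SimpleGraph V}
    {W : Set V} {S S' : Fin r → Set V} (hr : 0 < r)
    (hq : q + r ≤ Fintype.card V)
    (hgp : GoodPartition r t q H W S S')
    (x : Fin r → V) (hx : ∀ i, x i ∈ S' i)
    [Fintype ↥{v : V | ∀ i, v ≠ x i}] :
    GoodPartition r t q (H.induce {v : V | ∀ i, v ≠ x i})
      (Subtype.val ⁻¹' W) (fun i => Subtype.val ⁻¹' S i)
      (fun i => Subtype.val ⁻¹' S' i) := by
  obtain ⟨hcover, hdisjW, hdisj, hW, hsize, hS'⟩ := hgp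
  have hsub : ∀ i, S' i ⊆ S i := fun i => (hS' i).1
  have hxS : ∀ i, x i ∈ S i := fun i => hsub i (hx i)
  have hxinj : Function.Injective x := by
    intro i j hij
    by_contra hne
    exact (hdisj hne).le_bot ⟨hxS i, hij ▸ hxS j⟩
  have hTcard : Fintype.card ↥{v : V | ∀ i, v ≠ x i} = Fintype.card V - r := cardT_eq x hxinj
  have hWT : W ∩ {v : V | ∀ i, v ≠ x i} = W := by
    apply Set.inter_eq_left.mpr
    intro w hw i hwx
    exact (hdisjW i).le_bot ⟨hw, hwx ▸ hxS i⟩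
  refine ⟨?_, ?_, ?_, ?_, ?_, ?_⟩
  · rintro ⟨v, hv⟩
    rcases hcover v with h | ⟨i, h⟩
    · exact Or.inl h
    · exact Or.inr ⟨i, h⟩
  · exact fun i => (hdisjW i).preimage _
  · exact fun i j hij => (hdisj hij).preimage _
  · rw [ncard_preimage_val, hWT]; exact hW
  · intro i
    rw [ncard_preimage_S hdisj x hxS i, hTcard]
    have e1 : Fintype.card V - q + 1 = (Fintype.card V - r - q + 1) + r := by omega
    have e2 : Fintype.card V - q + 1 + r - 1 = (Fintype.card V - r - q + 1 + r - 1) + r := by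
      omega
    have d1 : (Fintype.card V - q + 1) / r = (Fintype.card V - r - q + 1) / r + 1 := by
      rw [e1, Nat.add_div_right _ hr]
    have d2 : (Fintype.card V - q + 1 + r - 1) / r
        = (Fintype.card V - r - q + 1 + r - 1) / r + 1 := by
      rw [e2, Nat.add_div_right _ hr]
    rcases hsize i with h | h
    · rw [d1] at h; exact Or.inl (by rw [h, Nat.add_sub_cancel])
    · rw [d2] at h; exact Or.inr (by rw [h, Nat.add_sub_cancel])
  · intro i
    obtain ⟨hsubi, hdiff, hnbhd⟩ := hS' i
    refine ⟨Set.preimage_mono hsubi, ?_, ?_⟩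
    · rw [← Set.preimage_diff, ncard_preimage_val]
      exact le_trans (Set.ncard_le_ncard Set.inter_subset_left (Set.toFinite _)) hdiff
    · rintro ⟨v, hv⟩ hmem
      have hnb := hnbhd v hmem
      ext ⟨u, hu⟩
      simp only [mem_neighborSet, comap_adj, Function.Embedding.coe_subtype, Set.mem_diff,
        Set.mem_univ, true_and, Set.mem_preimage]
      constructor
      · intro hadj
        have h2 : u ∈ H.neighborSet v := hadj
        rw [hnb] at h2
        exact h2.2
      · intro huS
        show H.Adj v u
        have h2 : u ∈ H.neighborSet v := by rw [hnb]; exact ⟨trivial, huS⟩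
        exact h2

/-- `H` is isomorphic to the extension of the graph obtained from `H` by deleting
one vertex `x i` of each `S' i`. -/
noncomputable def isoExtendInduce {V : Type*} [Fintype V] {r : ℕ} (H : SimpleGraph V)
    (S S' : Fin r → Set V)
    (hdisj : Pairwise fun i j => Disjoint (S i) (S j))
    (hsub : ∀ i, S' i ⊆ S i)
    (hnbhd : ∀ i, ∀ w ∈ S' i, H.neighborSet w = Set.univ \ S i)
    (x : Fin r → V) (hx : ∀ i, x i ∈ S' i) :
    (extendGraph (H.induce {v : V | ∀ i, v ≠ x i})
      (fun i => Subtype.val ⁻¹' S i)) ≃g H := by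
  have hxS : ∀ i, x i ∈ S i := fun i => hsub i (hx i)
  have hadjx : ∀ i w, H.Adj (x i) w ↔ w ∉ S i := by
    intro i w
    rw [show H.Adj (x i) w ↔ w ∈ H.neighborSet (x i) from Iff.rfl, hnbhd i (x i) (hx i)]
    simp
  set T : Set V := {v : V | ∀ i, v ≠ x i}
  let φ : ↥T ⊕ Fin r → V := Sum.elim Subtype.val x
  have hbij : Function.Bijective φ := by
    constructor
    · rintro (a | i) (b | j) h
      · exact congrArg Sum.inl (Subtype.val_injective h)
      · exact absurd h (a.2 j)
      · exact absurd h.symm (b.2 i)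
      · simp only [φ, Sum.elim_inr] at h
        by_contra hne
        have hij : i ≠ j := fun he => hne (he ▸ rfl)
        exact (hdisj hij).le_bot ⟨hxS i, h ▸ hxS j⟩
    · intro w
      by_cases hw : ∀ i, w ≠ x i
      · exact ⟨Sum.inl ⟨w, hw⟩, rfl⟩
      · push_neg at hw
        obtain ⟨i, hi⟩ := hw
        exact ⟨Sum.inr i, hi.symm⟩
  refine ⟨Equiv.ofBijective φ hbij, ?_⟩
  rintro (a | i) (b | j) <;>
    simp only [Equiv.ofBijective_apply, φ, Sum.elim_inl, Sum.elim_inr]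
  · exact Iff.rfl
  · show H.Adj ↑a (x j) ↔ a ∉ Subtype.val ⁻¹' S j
    rw [H.adj_comm, hadjx j ↑a]
    exact Iff.rfl
  · show H.Adj (x i) ↑b ↔ b ∉ Subtype.val ⁻¹' S i
    rw [hadjx i ↑b]
    exact Iff.rfl
  · show H.Adj (x i) (x j) ↔ i ≠ j
    rw [hadjx i (x j)]
    constructor
    · intro hnot he
      exact hnot (he ▸ hxS j)
    · intro hne hmem
      exact (hdisj hne).le_bot ⟨hmem, hxS j⟩

lemma goodPartition_map {V V' : Type*} [Fintype V] [Fintype V'] {r t q : ℕ}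
    {H : SimpleGraph V} {H' : SimpleGraph V'} (e : V ≃ V')
    (he : ∀ a b, H.Adj a b ↔ H'.Adj (e a) (e b))
    {W : Set V} {S S' : Fin r → Set V} (h : GoodPartition r t q H W S S') :
    GoodPartition r t q H' (e '' W) (fun i => e '' S i) (fun i => e '' S' i) := by
  obtain ⟨hcover, hdisjW, hdisj, hW, hsize, hS'⟩ := h
  have hcard : Fintype.card V' = Fintype.card V := (Fintype.card_congr e).symm
  have himg : ∀ B : Set V, (e '' B).ncard = B.ncard :=
    fun B => Set.ncard_image_of_injective _ e.injective
  refine ⟨?_, ?_, ?_, ?_, ?_, ?_⟩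
  · intro v'
    rcases hcover (e.symm v') with h | ⟨i, h⟩
    · exact Or.inl ⟨e.symm v', h, e.apply_symm_apply v'⟩
    · exact Or.inr ⟨i, ⟨e.symm v', h, e.apply_symm_apply v'⟩⟩
  · exact fun i => (Set.disjoint_image_iff e.injective).mpr (hdisjW i)
  · exact fun i j hij => (Set.disjoint_image_iff e.injective).mpr (hdisj hij)
  · rw [himg]; exact hW
  · intro i; rw [himg, hcard]; exact hsize i
  · intro i
    obtain ⟨hsub, hdiff, hnbhd⟩ := hS' i
    refine ⟨Set.image_mono hsub, ?_, ?_⟩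
    · rw [← Set.image_diff e.injective, himg]; exact hdiff
    · rintro v' ⟨v, hv, rfl⟩
      have hnb := hnbhd v hv
      ext w'
      simp only [mem_neighborSet, Set.mem_diff, Set.mem_univ, true_and]
      rw [show H'.Adj (e v) w' ↔ H.Adj v (e.symm w') from by
        rw [he v (e.symm w'), e.apply_symm_apply]]
      rw [show (H.Adj v (e.symm w')) ↔ e.symm w' ∈ H.neighborSet v from Iff.rfl, hnb]
      simp only [Set.mem_diff, Set.mem_univ, true_and]
      constructor
      · intro hns hmem
        obtain ⟨u, hu, huw⟩ := hmem
        exact hns (by rw [← huw, e.symm_apply_apply]; exact hu)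
      · intro hmem hns
        exact hmem ⟨e.symm w', hns, e.apply_symm_apply w'⟩

lemma inGm_map {ι V V' : Type*} [Fintype V] [Fintype V'] {𝓕 : ι → FinGraph} {r t q : ℕ}
    {H : SimpleGraph V} {H' : SimpleGraph V'} (e : V ≃ V')
    (he : ∀ a b, H.Adj a b ↔ H'.Adj (e a) (e b))
    (h : InGm 𝓕 r t q H) : InGm 𝓕 r t q H' := by
  obtain ⟨hfree, W, S, S', hgp⟩ := h
  refine ⟨?_, e '' W, _, _, goodPartition_map e he hgp⟩
  rintro k ⟨g, hg, hgadj⟩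
  exact hfree k ⟨e.symm ∘ g, e.symm.injective.comp hg, fun a b hab => by
    have := hgadj hab
    rw [show H'.Adj (g a) (g b) ↔ H.Adj (e.symm (g a)) (e.symm (g b)) from by
      rw [he (e.symm (g a)) (e.symm (g b)), e.apply_symm_apply, e.apply_symm_apply]] at this
    exact this⟩

lemma sum_const_sub {r c : ℕ} (s : Fin r → ℕ) (h : ∀ i, s i ≤ c) :
    ∑ i, (c - s i) = r * c - ∑ i, s i := by
  have h1 : ∑ i, (c - s i) + ∑ i, s i = r * c := by
    rw [← Finset.sum_add_distrib]
    have : ∀ i ∈ Finset.univ, (c - s i) + s i = c := fun i _ => Nat.sub_add_cancel (h i)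
    rw [Finset.sum_congr rfl this, Finset.sum_const, Finset.card_univ, Fintype.card_fin,
      smul_eq_mul]
  omega

end Auxiliary

/-- **Claim 1.** If `H` has the maximum number of edges among all members of `𝒢_m`, then
`𝒟(H)` has the maximum number of edges among all members of `𝒢_{m+r}`, and `𝒟⁻¹(H)`
(obtained by deleting one vertex of `S'_i` for each `i`) has the maximum number of edges
among all members of `𝒢_{m-r}`. -/
theorem extremal_in_Gm_stable {ι : Type*} [Fintype ι] [Nonempty ι]
    (𝓕 : ι → FinGraph) (r t q : ℕ) (hr : 2 ≤ r)
    (hχmin : ∀ i, ((r : ℕ∞) + 1) ≤ (𝓕 i).2.chromaticNumber)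
    (hχeq : ∃ i, (𝓕 i).2.chromaticNumber = ((r : ℕ∞) + 1))
    (htmax : ∀ i, (𝓕 i).1 ≤ t)
    (hteq : ∃ i, (𝓕 i).1 = t)
    (hq : IsLeast {s : ℕ | ∃ i, ContainsCopy (𝓕 i).2
      (gJoin (⊥ : SimpleGraph (Fin s)) (turanGraph (t * r) r))} q) :
    ∃ M₀ : ℕ, ∀ m, M₀ ≤ m → ∀ H : SimpleGraph (Fin m),
      FamFree 𝓕 H →
      ∀ (W : Set (Fin m)) (S S' : Fin r → Set (Fin m)),
        GoodPartition r t q H W S S' →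
        (∀ K : SimpleGraph (Fin m), InGm 𝓕 r t q K → edgeCount K ≤ edgeCount H) →
        (InGm 𝓕 r t q (extendGraph H S) ∧
          ∀ K : SimpleGraph (Fin (m + r)), InGm 𝓕 r t q K →
            edgeCount K ≤ edgeCount (extendGraph H S)) ∧
        (∀ x : Fin r → Fin m, (∀ i, x i ∈ S' i) →
          InGm 𝓕 r t q (H.induce {v : Fin m | ∀ i, v ≠ x i}) ∧
          ∀ K : SimpleGraph (Fin (m - r)), InGm 𝓕 r t q K →
            edgeCount K ≤ edgeCount (H.induce {v : Fin m | ∀ i, v ≠ x i})) := by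
  
  classical
  refine ⟨q + 2 * r + r * (t ^ 2 + t + 1) + 2 * r + 2, ?_⟩
  intro m hm H hfree W S S' hgp hmax
  have hr0 : 0 < r := by omega
  obtain ⟨hcover, hdisjW, hdisj, hW, hsize, hS'⟩ := hgp
  have hgp' : GoodPartition r t q H W S S' := ⟨hcover, hdisjW, hdisj, hW, hsize, hS'⟩
  have hsub : ∀ i, S' i ⊆ S i := fun i => (hS' i).1
  have hnbhd : ∀ i, ∀ v ∈ S' i, H.neighborSet v = Set.univ \ S i := fun i => (hS' i).2.2
  have hcardm : Fintype.card (Fin m) = m := Fintype.card_fin m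
  have hbigH : ∀ i, t < (S' i).ncard :=
    S'_big hgp' hr0 (by rw [hcardm]; omega)
  have hsum1 := goodPartition_sum hgp'
  rw [hcardm] at hsum1
  have hSpos : ∀ i, 1 ≤ (S i).ncard := by
    intro i
    have h1 := hbigH i
    have h2 := Set.ncard_le_ncard (hsub i) (Set.toFinite _)
    omega
  have hSub : ∀ i, (S i).ncard ≤ m - r + 1 := by
    intro i
    have h1 := ncard_S_le_ceil hr0 hgp' i
    rw [hcardm] at h1
    have h2 : (m - q + 1 + r - 1) / r ≤ (m + 2 * r) / r := Nat.div_le_div_right (by omega)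
    have h3 : (m + 2 * r) / r ≤ (m + 2 * r) / 2 := Nat.div_le_div_left hr (by norm_num)
    omega
  constructor
  · -- Part 1 : the extension is extremal in 𝒢_{m+r}
    have hfreeExt : FamFree 𝓕 (extendGraph H S) :=
      famFree_extendGraph htmax hdisj hsub hnbhd hbigH hfree
    have hgpExt := goodPartition_extendGraph hr0 (by rw [hcardm]; omega) hgp'
    refine ⟨⟨hfreeExt, _, _, _, hgpExt⟩, ?_⟩
    rintro K ⟨hKfree, WK, T, T', hKgp⟩
    have hKgp' := hKgp
    obtain ⟨hKcover, hKdisjW, hKdisj, hKW, hKsize, hKS'⟩ := hKgp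
    have hKsub : ∀ i, T' i ⊆ T i := fun i => (hKS' i).1
    have hKnbhd : ∀ i, ∀ v ∈ T' i, K.neighborSet v = Set.univ \ T i := fun i => (hKS' i).2.2
    have hcardmr : Fintype.card (Fin (m + r)) = m + r := Fintype.card_fin _
    have hKbig : ∀ i, t < (T' i).ncard :=
      S'_big hKgp' hr0 (by rw [hcardmr]; omega)
    have hKsum := goodPartition_sum hKgp'
    rw [hcardmr] at hKsum
    have hKpos : ∀ i, 1 ≤ (T i).ncard := by
      intro i
      have h1 := hKbig i
      have h2 := Set.ncard_le_ncard (hKsub i) (Set.toFinite _)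
      omega
    have hKub : ∀ i, (T i).ncard ≤ m + 1 := by
      intro i
      have h1 := ncard_S_le_ceil hr0 hKgp' i
      rw [hcardmr] at h1
      have h2 : (m + r - q + 1 + r - 1) / r ≤ (m + 2 * r) / r := Nat.div_le_div_right (by omega)
      have h3 : (m + 2 * r) / r ≤ (m + 2 * r) / 2 := Nat.div_le_div_left hr (by norm_num)
      omega
    have hyex : ∀ i, (T' i).Nonempty := fun i =>
      Set.nonempty_of_ncard_ne_zero (by have := hKbig i; omega)
    choose y hy using hyex
    have hyT : ∀ i, y i ∈ T i := fun i => hKsub i (hy i)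
    have hyinj : Function.Injective y := by
      intro i j hij
      by_contra hne
      exact (hKdisj (fun h => hne h)).le_bot ⟨hyT i, hij ▸ hyT j⟩
    have hTYcard : Fintype.card ↥{v : Fin (m + r) | ∀ i, v ≠ y i} = m := by
      rw [cardT_eq y hyinj, hcardmr]
      omega
    have iso1 := isoExtendInduce K T T' hKdisj hKsub hKnbhd y hy
    have hT1 : ∀ i, (Subtype.val ⁻¹' T i : Set ↥{v : Fin (m + r) | ∀ j, v ≠ y j}).ncard
        = (T i).ncard - 1 := ncard_preimage_S hKdisj y hyT
    have hEK : edgeCount K = edgeCount (K.induce {v : Fin (m + r) | ∀ i, v ≠ y i})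
        + (∑ i, (m - ((T i).ncard - 1))) + r.choose 2 := by
      rw [← edgeCount_congr iso1, edgeCount_extendGraph]
      congr 1
      congr 1
      apply Finset.sum_congr rfl
      intro i _
      rw [hT1 i, hTYcard]
    -- transfer the induced graph to `Fin m`
    set e : ↥{v : Fin (m + r) | ∀ i, v ≠ y i} ≃ Fin m := Fintype.equivFinOfCardEq hTYcard with he_def
    set KI := K.induce {v : Fin (m + r) | ∀ i, v ≠ y i} with hKI
    have he : ∀ a b, KI.Adj a b ↔ (SimpleGraph.comap (⇑e.symm) KI).Adj (e a) (e b) := by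
      intro a b
      simp [SimpleGraph.comap]
    have hKIfree : FamFree 𝓕 KI :=
      famFree_of_hom Subtype.val Subtype.val_injective (fun a b h => h) hKfree
    have hKIgp := goodPartition_induce hr0 (by rw [hcardmr]; omega) hKgp' y hy
    have hKin : InGm 𝓕 r t q (SimpleGraph.comap (⇑e.symm) KI) :=
      inGm_map e he ⟨hKIfree, _, _, _, hKIgp⟩
    have hle : edgeCount (SimpleGraph.comap (⇑e.symm) KI) ≤ edgeCount H :=
      hmax _ hKin
    have hEKI : edgeCount KI = edgeCount (SimpleGraph.comap (⇑e.symm) KI) :=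
      edgeCount_congr ⟨e, fun {a b} => (he a b).symm⟩
    have hEH : edgeCount (extendGraph H S)
        = edgeCount H + (∑ i, (m - (S i).ncard)) + r.choose 2 := by
      rw [edgeCount_extendGraph]
      congr 1
      congr 1
      apply Finset.sum_congr rfl
      intro i _
      rw [hcardm]
    have hsumEq : ∑ i, (m - ((T i).ncard - 1)) = ∑ i, (m - (S i).ncard) := by
      rw [sum_const_sub (fun i => (T i).ncard - 1)
          (fun i => show (T i).ncard - 1 ≤ m by have := hKub i; omega),
        sum_const_sub (fun i => (S i).ncard)
          (fun i => show (S i).ncard ≤ m by have := hSub i; omega)]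
      have hTm1 : ∑ i, ((T i).ncard - 1) + ∑ _i : Fin r, 1 = ∑ i, (T i).ncard := by
        rw [← Finset.sum_add_distrib]
        exact Finset.sum_congr rfl fun i _ => Nat.sub_add_cancel (hKpos i)
      have hr1 : ∑ _i : Fin r, 1 = r := by
        rw [Finset.sum_const, Finset.card_univ, Fintype.card_fin, smul_eq_mul, Nat.mul_one]
      rw [hr1] at hTm1
      omega
    rw [hEK, hEH, hsumEq, hEKI]
    omega
  · -- Part 2 : the deletion is extremal in 𝒢_{m-r}
    intro x hx
    have hxS : ∀ i, x i ∈ S i := fun i => hsub i (hx i)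
    have hxinj : Function.Injective x := by
      intro i j hij
      by_contra hne
      exact (hdisj (fun h => hne h)).le_bot ⟨hxS i, hij ▸ hxS j⟩
    have hTXcard : Fintype.card ↥{v : Fin m | ∀ i, v ≠ x i} = m - r := by
      rw [cardT_eq x hxinj, hcardm]
    have hIfree : FamFree 𝓕 (H.induce {v : Fin m | ∀ i, v ≠ x i}) :=
      famFree_of_hom Subtype.val Subtype.val_injective (fun a b h => h) hfree
    have hIgp := goodPartition_induce hr0 (by rw [hcardm]; omega) hgp' x hx
    refine ⟨⟨hIfree, _, _, _, hIgp⟩, ?_⟩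
    rintro K ⟨hKfree, WK, T2, T2', hKgp⟩
    have hKgp' := hKgp
    obtain ⟨hKcover, hKdisjW, hKdisj, hKW, hKsize, hKS'⟩ := hKgp
    have hKsub : ∀ i, T2' i ⊆ T2 i := fun i => (hKS' i).1
    have hKnbhd : ∀ i, ∀ v ∈ T2' i, K.neighborSet v = Set.univ \ T2 i := fun i => (hKS' i).2.2
    have hcardm2 : Fintype.card (Fin (m - r)) = m - r := Fintype.card_fin _
    have hKbig : ∀ i, t < (T2' i).ncard :=
      S'_big hKgp' hr0 (by rw [hcardm2]; omega)
    have hKsum := goodPartition_sum hKgp'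
    rw [hcardm2] at hKsum
    have hKub : ∀ i, (T2 i).ncard ≤ m - r := by
      intro i
      have h1 := ncard_S_le_ceil hr0 hKgp' i
      rw [hcardm2] at h1
      have h2 : (m - r - q + 1 + r - 1) / r ≤ (m + r) / r := Nat.div_le_div_right (by omega)
      have h3 : (m + r) / r ≤ (m + r) / 2 := Nat.div_le_div_left hr (by norm_num)
      omega
    have hfreeExt : FamFree 𝓕 (extendGraph K T2) :=
      famFree_extendGraph htmax hKdisj hKsub hKnbhd hKbig hKfree
    have hgpExt := goodPartition_extendGraph hr0 (by rw [hcardm2]; omega) hKgp'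
    have hcardsum : Fintype.card (Fin (m - r) ⊕ Fin r) = m := by
      rw [Fintype.card_sum, Fintype.card_fin, Fintype.card_fin]
      omega
    set e2 : (Fin (m - r) ⊕ Fin r) ≃ Fin m := Fintype.equivFinOfCardEq hcardsum with he2_def
    have he2 : ∀ a b, (extendGraph K T2).Adj a b ↔
        (SimpleGraph.comap (⇑e2.symm) (extendGraph K T2)).Adj (e2 a) (e2 b) := by
      intro a b
      simp [SimpleGraph.comap]
    have hKin : InGm 𝓕 r t q (SimpleGraph.comap (⇑e2.symm) (extendGraph K T2)) :=
      inGm_map e2 he2 ⟨hfreeExt, _, _, _, hgpExt⟩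
    have hle : edgeCount (SimpleGraph.comap (⇑e2.symm) (extendGraph K T2)) ≤ edgeCount H :=
      hmax _ hKin
    have hEKex : edgeCount (extendGraph K T2)
        = edgeCount (SimpleGraph.comap (⇑e2.symm) (extendGraph K T2)) :=
      edgeCount_congr ⟨e2, fun {a b} => (he2 a b).symm⟩
    have hEK : edgeCount (extendGraph K T2)
        = edgeCount K + (∑ i, (m - r - (T2 i).ncard)) + r.choose 2 := by
      rw [edgeCount_extendGraph]
      congr 1
      congr 1
      apply Finset.sum_congr rfl
      intro i _
      rw [hcardm2]
    have iso4 := isoExtendInduce H S S' hdisj hsub hnbhd x hx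
    have hS1 : ∀ i, (Subtype.val ⁻¹' S i : Set ↥{v : Fin m | ∀ j, v ≠ x j}).ncard
        = (S i).ncard - 1 := ncard_preimage_S hdisj x hxS
    have hEH : edgeCount H = edgeCount (H.induce {v : Fin m | ∀ i, v ≠ x i})
        + (∑ i, (m - r - ((S i).ncard - 1))) + r.choose 2 := by
      rw [← edgeCount_congr iso4, edgeCount_extendGraph]
      congr 1
      congr 1
      apply Finset.sum_congr rfl
      intro i _
      rw [hS1 i, hTXcard]
    have hsumEq : ∑ i, (m - r - (T2 i).ncard) = ∑ i, (m - r - ((S i).ncard - 1)) := by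
      rw [sum_const_sub (fun i => (T2 i).ncard)
          (fun i => show (T2 i).ncard ≤ m - r from hKub i),
        sum_const_sub (fun i => (S i).ncard - 1)
          (fun i => show (S i).ncard - 1 ≤ m - r by have := hSub i; omega)]
      have hSm1 : ∑ i, ((S i).ncard - 1) + ∑ _i : Fin r, 1 = ∑ i, (S i).ncard := by
        rw [← Finset.sum_add_distrib]
        exact Finset.sum_congr rfl fun i _ => Nat.sub_add_cancel (hSpos i)
      have hr1 : ∑ _i : Fin r, 1 = r := by
        rw [Finset.sum_const, Finset.card_univ, Fintype.card_fin, smul_eq_mul, Nat.mul_one]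
      rw [hr1] at hSm1
      omega
    rw [hEH] at hle
    rw [← hEKex, hEK, hsumEq] at hle
    omega
end
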